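/- Every amenable group is sofic; moreover the sofic approximations can be taken of the following special form: given a finite K ⊆ G and ε > 0, there exist a finite symmetric Følner set F ⊆ G, a subset E ⊆ F with |E| ≥ (1−ε)|F|, and a map φ: G → Sym(F) such that φ(k₁)φ(k₂)f = k₁k₂f = φ(k₁k₂)f for all k₁,k₂ ∈ K and f ∈ E, and φ(k)f = kf for all k ∈ K and f ∈ E. -/

import Mathlib

/-- Normalized Hamming distance on the symmetric group of a finite set. -/
noncomputable def hamDist {F : Type*} [Fintype F] (α β : Equiv.Perm F) : ℝ :=
  (Nat.card {f : F // α f ≠ β f} : ℝ) / (Fintype.card F : ℝ)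

/-- A group is sofic if every finite subset admits `(K,ε)`-approximations into
finite symmetric groups with the normalized Hamming distance. -/
def IsSofic (G : Type*) [Group G] : Prop :=
  ∀ (K : Finset G) (ε : ℝ), 0 < ε →
    ∃ (F : Type) (_ : Fintype F) (_ : Nonempty F) (φ : G → Equiv.Perm F),
      (∀ k₁ ∈ K, ∀ k₂ ∈ K, hamDist (φ (k₁ * k₂)) (φ k₁ * φ k₂) ≤ ε) ∧
      (∀ k₁ ∈ K, ∀ k₂ ∈ K, k₁ ≠ k₂ → 1 - ε ≤ hamDist (φ k₁) (φ k₂))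

/-- Amenability via Følner sets: for every finite `S ⊆ G` and `ε > 0` there is a
nonempty finite `F ⊆ G` with `|F \ sF| < ε|F|` for all `s ∈ S`. -/
def IsAmenableFolner (G : Type*) [Group G] [DecidableEq G] : Prop :=
  ∀ (S : Finset G) (ε : ℝ), 0 < ε →
    ∃ F : Finset G, F.Nonempty ∧
      ∀ s ∈ S, ((F \ F.image (s * ·)).card : ℝ) < ε * F.card


section AmenableSofic

open Finset
open scoped Pointwise

variable {G : Type*} [Group G] [DecidableEq G]

/-- Convolution count: number of pairs `(a,b) ∈ F × F` with `a * b⁻¹ = x`. -/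
def vfun (F : Finset G) (x : G) : ℕ :=
  ((F ×ˢ F).filter (fun p => p.1 * p.2⁻¹ = x)).card

lemma vfun_le (F : Finset G) (x : G) : vfun F x ≤ F.card := by
  apply Finset.card_le_card_of_injOn (fun p => p.1)
  · intro p hp
    simp only [mem_coe, mem_filter, mem_product] at hp
    exact hp.1.1
  · intro p hp q hq h
    simp only [coe_filter, Set.mem_setOf_eq, mem_product] at hp hq
    have : p.2 = q.2 := by
      simp only at h
      have : p.1 * p.2⁻¹ = q.1 * q.2⁻¹ := by rw [hp.2, hq.2]
      rw [h] at this
      exact inv_injective (mul_left_cancel this)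
    exact Prod.ext h this

lemma vfun_inv (F : Finset G) (x : G) : vfun F x⁻¹ = vfun F x := by
  unfold vfun
  apply Finset.card_nbij' (fun p => (p.2, p.1)) (fun p => (p.2, p.1))
  · intro p hp
    simp only [mem_coe, mem_filter, mem_product] at hp ⊢
    exact ⟨⟨hp.1.2, hp.1.1⟩, by have := congrArg (·⁻¹) hp.2; simpa using this⟩
  · intro p hp
    simp only [mem_coe, mem_filter, mem_product] at hp ⊢
    exact ⟨⟨hp.1.2, hp.1.1⟩, by have := congrArg (·⁻¹) hp.2; simpa using this⟩
  · intro p _; rfl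
  · intro p _; rfl

lemma mem_image_mul_iff (F : Finset G) (s x : G) :
    x ∈ F.image (s * ·) ↔ s⁻¹ * x ∈ F := by
  simp only [mem_image]
  constructor
  · rintro ⟨y, hy, rfl⟩; simpa
  · intro h; exact ⟨s⁻¹ * x, h, by group⟩

lemma vfun_shift (F : Finset G) (s x : G) :
    vfun F (s⁻¹ * x) = (((F.image (s * ·)) ×ˢ F).filter (fun p => p.1 * p.2⁻¹ = x)).card := by
  unfold vfun
  apply Finset.card_nbij' (fun p => (s * p.1, p.2)) (fun p => (s⁻¹ * p.1, p.2))
  · intro p hp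
    simp only [mem_coe, mem_filter, mem_product, mem_image] at hp ⊢
    refine ⟨⟨⟨p.1, hp.1.1, rfl⟩, hp.1.2⟩, ?_⟩
    rw [mul_assoc, hp.2]; group
  · intro p hp
    simp only [mem_coe, mem_filter, mem_product, mem_image_mul_iff] at hp ⊢
    refine ⟨⟨hp.1.1, hp.1.2⟩, ?_⟩
    rw [mul_assoc, hp.2]
  · intro p _; simp
  · intro p _; simp

lemma symmetric_folner (hG : IsAmenableFolner G) (S : Finset G) (ε : ℝ) (hε : 0 < ε) :
    ∃ E : Finset G, E.Nonempty ∧ (∀ e ∈ E, e⁻¹ ∈ E) ∧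
      ∀ s ∈ S, ((E \ E.image (s * ·)).card : ℝ) < ε * E.card := by
  rcases S.eq_empty_or_nonempty with rfl | hS
  · exact ⟨{1}, ⟨1, by simp⟩, by simp, by simp⟩
  have hScard : (0 : ℝ) < S.card := by exact_mod_cast Finset.card_pos.mpr hS
  set δ := ε / S.card with hδdef
  have hδ : 0 < δ := div_pos hε hScard
  obtain ⟨F, hFne, hF⟩ := hG S δ hδ
  set N := F.card with hN
  have hN0 : 0 < N := card_pos.mpr hFne
  set D : Finset G := (F ×ˢ F).image (fun p => p.1 * p.2⁻¹) with hD
  set X : Finset G := D ∪ S.biUnion (fun s => D.image (s * ·)) with hX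
  have hDX : D ⊆ X := subset_union_left
  have hsupp : ∀ y : G, 1 ≤ vfun F y → y ∈ D := by
    intro y hy
    unfold vfun at hy
    obtain ⟨p, hp⟩ := card_pos.mp hy
    rw [mem_filter] at hp
    exact mem_image.mpr ⟨p, hp.1, hp.2⟩
  set Et : ℕ → Finset G := fun t => D.filter (fun x => t ≤ vfun F x) with hEt
  have hvle : ∀ x : G, vfun F x ≤ N := fun x => vfun_le F x
  -- total mass
  have hsumv : ∑ x ∈ D, vfun F x = N * N := by
    have h := Finset.card_eq_sum_card_fiberwise
      (f := fun p : G × G => p.1 * p.2⁻¹) (s := F ×ˢ F) (t := D)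
      (fun p hp => mem_image.mpr ⟨p, hp, rfl⟩)
    rw [card_product] at h
    exact h.symm
  have hsumEt : ∑ t ∈ Finset.Icc 1 N, (Et t).card = N * N := by
    have h1 : ∀ t, (Et t).card = ∑ x ∈ D, if t ≤ vfun F x then 1 else 0 :=
      fun t => Finset.card_filter _ _
    calc ∑ t ∈ Finset.Icc 1 N, (Et t).card
        = ∑ t ∈ Finset.Icc 1 N, ∑ x ∈ D, if t ≤ vfun F x then 1 else 0 := by
          exact Finset.sum_congr rfl fun t _ => h1 t
      _ = ∑ x ∈ D, ∑ t ∈ Finset.Icc 1 N, if t ≤ vfun F x then 1 else 0 := Finset.sum_comm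
      _ = ∑ x ∈ D, vfun F x := by
          refine Finset.sum_congr rfl fun x _ => ?_
          rw [← Finset.card_filter]
          have hx := hvle x
          have : (Finset.Icc 1 N).filter (fun t => t ≤ vfun F x)
              = Finset.Icc 1 (vfun F x) := by
            ext u; simp only [Finset.mem_filter, Finset.mem_Icc]; omega
          rw [this, Nat.card_Icc]
          omega
      _ = N * N := hsumv
  -- key per-s bound
  have key : ∀ s ∈ S, (∑ t ∈ Finset.Icc 1 N, ((Et t) \ (Et t).image (s * ·)).card)
      ≤ (F \ F.image (s * ·)).card * N := by
    intro s hs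
    have step1 : ∀ t ∈ Finset.Icc 1 N, ((Et t) \ (Et t).image (s * ·)).card
        ≤ (X.filter (fun x => t ≤ vfun F x ∧ ¬ t ≤ vfun F (s⁻¹ * x))).card := by
      intro t ht
      apply card_le_card
      intro x hx
      rw [mem_sdiff] at hx
      obtain ⟨hx1, hx2⟩ := hx
      rw [hEt, mem_filter] at hx1
      refine mem_filter.mpr ⟨hDX hx1.1, hx1.2, fun hcon => hx2 ?_⟩
      rw [mem_image_mul_iff]
      exact mem_filter.mpr ⟨hsupp _ (le_trans (Finset.mem_Icc.mp ht).1 hcon), hcon⟩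
    have swap1 : ∑ t ∈ Finset.Icc 1 N,
        (X.filter (fun x => t ≤ vfun F x ∧ ¬ t ≤ vfun F (s⁻¹ * x))).card
        = ∑ x ∈ X, (vfun F x - vfun F (s⁻¹ * x)) := by
      calc ∑ t ∈ Finset.Icc 1 N,
            (X.filter (fun x => t ≤ vfun F x ∧ ¬ t ≤ vfun F (s⁻¹ * x))).card
          = ∑ t ∈ Finset.Icc 1 N, ∑ x ∈ X,
              if t ≤ vfun F x ∧ ¬ t ≤ vfun F (s⁻¹ * x) then 1 else 0 := by
            exact Finset.sum_congr rfl fun t _ => Finset.card_filter _ _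
        _ = ∑ x ∈ X, ∑ t ∈ Finset.Icc 1 N,
              if t ≤ vfun F x ∧ ¬ t ≤ vfun F (s⁻¹ * x) then 1 else 0 := Finset.sum_comm
        _ = ∑ x ∈ X, (vfun F x - vfun F (s⁻¹ * x)) := by
            refine Finset.sum_congr rfl fun x _ => ?_
            rw [← Finset.card_filter]
            have hx := hvle x
            have : (Finset.Icc 1 N).filter
                (fun t => t ≤ vfun F x ∧ ¬ t ≤ vfun F (s⁻¹ * x))
                = Finset.Icc (vfun F (s⁻¹ * x) + 1) (vfun F x) := by
              ext u; simp only [Finset.mem_filter, Finset.mem_Icc]; omega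
            rw [this, Nat.card_Icc]
            omega
    have step2 : ∀ x ∈ X, vfun F x - vfun F (s⁻¹ * x)
        ≤ (((F \ F.image (s * ·)) ×ˢ F).filter (fun p => p.1 * p.2⁻¹ = x)).card := by
      intro x _
      have hshift := vfun_shift F s x
      have hsub : (F ×ˢ F).filter (fun p : G × G => p.1 * p.2⁻¹ = x)
          ⊆ ((F.image (s * ·)) ×ˢ F).filter (fun p => p.1 * p.2⁻¹ = x)
            ∪ ((F \ F.image (s * ·)) ×ˢ F).filter (fun p => p.1 * p.2⁻¹ = x) := by
        intro p hp
        simp only [mem_filter, mem_product, mem_union, mem_sdiff] at hp ⊢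
        by_cases h : p.1 ∈ F.image (s * ·)
        · exact Or.inl ⟨⟨h, hp.1.2⟩, hp.2⟩
        · exact Or.inr ⟨⟨⟨hp.1.1, h⟩, hp.1.2⟩, hp.2⟩
      have hle := (card_le_card hsub).trans (card_union_le _ _)
      have : vfun F x ≤ vfun F (s⁻¹ * x)
          + (((F \ F.image (s * ·)) ×ˢ F).filter (fun p => p.1 * p.2⁻¹ = x)).card := by
        rw [hshift]; exact hle
      omega
    have sumw : ∑ x ∈ X,
        (((F \ F.image (s * ·)) ×ˢ F).filter (fun p => p.1 * p.2⁻¹ = x)).card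
        = (F \ F.image (s * ·)).card * N := by
      have h := Finset.card_eq_sum_card_fiberwise
        (f := fun p : G × G => p.1 * p.2⁻¹) (s := (F \ F.image (s * ·)) ×ˢ F) (t := X)
        (fun p hp => by
          rw [mem_coe, mem_product] at hp
          refine hDX (mem_image.mpr ⟨p, ?_, rfl⟩)
          rw [mem_product]
          exact ⟨(mem_sdiff.mp hp.1).1, hp.2⟩)
      rw [card_product] at h
      exact h.symm
    calc ∑ t ∈ Finset.Icc 1 N, ((Et t) \ (Et t).image (s * ·)).card
        ≤ ∑ t ∈ Finset.Icc 1 N,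
            (X.filter (fun x => t ≤ vfun F x ∧ ¬ t ≤ vfun F (s⁻¹ * x))).card :=
          Finset.sum_le_sum step1
      _ = ∑ x ∈ X, (vfun F x - vfun F (s⁻¹ * x)) := swap1
      _ ≤ ∑ x ∈ X,
            (((F \ F.image (s * ·)) ×ˢ F).filter (fun p => p.1 * p.2⁻¹ = x)).card :=
          Finset.sum_le_sum step2
      _ = (F \ F.image (s * ·)).card * N := sumw
  -- sum over s, cast to ℝ, pigeonhole
  have main : (∑ t ∈ Finset.Icc 1 N, ∑ s ∈ S, (((Et t) \ (Et t).image (s * ·)).card : ℝ))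
      < ∑ t ∈ Finset.Icc 1 N, ε * ((Et t).card : ℝ) := by
    rw [Finset.sum_comm]
    have hL : ∑ s ∈ S, ∑ t ∈ Finset.Icc 1 N, (((Et t) \ (Et t).image (s * ·)).card : ℝ)
        < ∑ s ∈ S, δ * N * N := by
      apply Finset.sum_lt_sum_of_nonempty hS
      intro s hs
      have h1 : (∑ t ∈ Finset.Icc 1 N, (((Et t) \ (Et t).image (s * ·)).card : ℝ))
          ≤ ((F \ F.image (s * ·)).card : ℝ) * N := by
        rw [← Nat.cast_sum]
        exact_mod_cast key s hs
      refine h1.trans_lt ?_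
      have h2 := hF s hs
      have hNpos : (0 : ℝ) < N := by exact_mod_cast hN0
      calc ((F \ F.image (s * ·)).card : ℝ) * N < (δ * N) * N :=
            mul_lt_mul_of_pos_right h2 hNpos
        _ = δ * N * N := by ring
    have hR : ∑ t ∈ Finset.Icc 1 N, ε * ((Et t).card : ℝ) = ε * (N * N) := by
      rw [← Finset.mul_sum, ← Nat.cast_sum]
      exact_mod_cast congrArg (fun n : ℕ => ε * (n : ℝ)) hsumEt
    rw [hR]
    refine hL.trans_le (le_of_eq ?_)
    rw [Finset.sum_const, nsmul_eq_mul, hδdef]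
    field_simp
  obtain ⟨t, ht, hlt⟩ := Finset.exists_lt_of_sum_lt main
  have ht1 : 1 ≤ t := (Finset.mem_Icc.mp ht).1
  refine ⟨Et t, ?_, ?_, ?_⟩
  · rcases (Et t).eq_empty_or_nonempty with he | he
    · exfalso
      rw [he] at hlt
      simp only [card_empty, Nat.cast_zero, mul_zero] at hlt
      exact absurd hlt (not_lt.mpr (Finset.sum_nonneg fun s _ => by positivity))
    · exact he
  · intro e he
    rw [hEt, mem_filter] at he ⊢
    have hv : t ≤ vfun F e⁻¹ := by rw [vfun_inv]; exact he.2
    exact ⟨hsupp _ (le_trans ht1 hv), hv⟩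
  · intro s hs
    calc (((Et t) \ (Et t).image (s * ·)).card : ℝ)
        ≤ ∑ s' ∈ S, (((Et t) \ (Et t).image (s' * ·)).card : ℝ) :=
          Finset.single_le_sum (f := fun s' => (((Et t) \ (Et t).image (s' * ·)).card : ℝ))
            (fun s' _ => by positivity) hs
      _ < ε * (Et t).card := hlt

/-- The bijection between `{x ∈ F : k x ∈ F}` and `{y ∈ F : k⁻¹ y ∈ F}` given by
left multiplication by `k`. -/
def mulSubEquiv (F : Finset G) (k : G) :
    {x : {x : G // x ∈ F} // k * (x : G) ∈ F} ≃ {y : {x : G // x ∈ F} // k⁻¹ * (y : G) ∈ F} where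
  toFun x := ⟨⟨k * (x : G), x.2⟩, by simp [x.1.2]⟩
  invFun y := ⟨⟨k⁻¹ * (y : G), y.2⟩, by simp [y.1.2]⟩
  left_inv x := by ext; simp
  right_inv y := by ext; simp

/-- A permutation of `F` extending `x ↦ k * x` on `{x ∈ F : k x ∈ F}`. -/
noncomputable def mulPerm (F : Finset G) (k : G) : Equiv.Perm {x : G // x ∈ F} :=
  (Equiv.sumCompl (fun x : {x : G // x ∈ F} => k * (x : G) ∈ F)).symm.trans
    (((mulSubEquiv F k).sumCongr
        (Fintype.equivOfCardEq (Fintype.card_compl_eq_card_compl _ _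
          (Fintype.card_congr (mulSubEquiv F k))))).trans
      (Equiv.sumCompl (fun y : {x : G // x ∈ F} => k⁻¹ * (y : G) ∈ F)))

lemma mulPerm_apply (F : Finset G) (k : G) (x : {x : G // x ∈ F}) (h : k * (x : G) ∈ F) :
    ((mulPerm F k x : {x : G // x ∈ F}) : G) = k * (x : G) := by
  unfold mulPerm
  rw [Equiv.trans_apply, Equiv.sumCompl_symm_apply_of_pos (p := fun x : {x : G // x ∈ F} => k * (x : G) ∈ F) h]
  rfl

lemma card_subtype_mem' (F E : Finset G) (hE : E ⊆ F) :
    Fintype.card {f : {x : G // x ∈ F} // (f : G) ∈ E} = E.card := by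
  rw [← Fintype.card_coe E]
  exact Fintype.card_congr
    ⟨fun f => ⟨f.1.1, f.2⟩, fun x => ⟨⟨x.1, hE x.2⟩, x.2⟩,
     fun f => by ext; rfl, fun x => by ext; rfl⟩

lemma permCongr_mul {α β : Type*} (e : α ≃ β) (σ τ : Equiv.Perm α) :
    e.permCongr (σ * τ) = e.permCongr σ * e.permCongr τ := by
  ext b
  simp [Equiv.permCongr_apply, Equiv.Perm.mul_apply]

lemma hamDist_permCongr {α β : Type*} [Fintype α] [Fintype β] (e : α ≃ β)
    (σ τ : Equiv.Perm α) :
    hamDist (e.permCongr σ) (e.permCongr τ) = hamDist σ τ := by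
  unfold hamDist
  rw [show Fintype.card β = Fintype.card α from (Fintype.card_congr e).symm]
  congr 2
  refine Nat.card_congr (Equiv.subtypeEquiv e (fun a => ?_)).symm
  simp [Equiv.permCongr_apply]

lemma sofic_from_special
    (hspec : ∀ (K : Finset G) (ε : ℝ), 0 < ε →
      ∃ F : Finset G, F.Nonempty ∧
        (∀ f ∈ F, f⁻¹ ∈ F) ∧
        (∀ k ∈ K, ((F \ F.image (k * ·)).card : ℝ) < ε * F.card) ∧
        ∃ E : Finset G, E ⊆ F ∧ (1 - ε) * F.card ≤ (E.card : ℝ) ∧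
          ∃ φ : G → Equiv.Perm {x : G // x ∈ F},
            (∀ k₁ ∈ K, ∀ k₂ ∈ K, ∀ f : {x : G // x ∈ F}, (f : G) ∈ E →
              ((φ k₁ (φ k₂ f) : G) = k₁ * k₂ * f ∧ (φ (k₁ * k₂) f : G) = k₁ * k₂ * f)) ∧
            (∀ k ∈ K, ∀ f : {x : G // x ∈ F}, (f : G) ∈ E → (φ k f : G) = k * f)) :
    IsSofic G := by
  intro K ε hε
  obtain ⟨F, hFne, -, -, E, hEF, hEcard, φ, hφ2, hφ1⟩ := hspec K ε hε
  have hFpos : (0 : ℝ) < F.card := by exact_mod_cast Finset.card_pos.mpr hFne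
  have hEleF : E.card ≤ F.card := card_le_card hEF
  have hcardα : Fintype.card {x : G // x ∈ F} = F.card := Fintype.card_coe F
  let e : {x : G // x ∈ F} ≃ Fin (Fintype.card {x : G // x ∈ F}) :=
    Fintype.equivFin {x : G // x ∈ F}
  obtain ⟨x0, hx0⟩ := hFne
  refine ⟨Fin (Fintype.card {x : G // x ∈ F}), inferInstance, ⟨e ⟨x0, hx0⟩⟩,
    fun k => e.permCongr (φ k), ?_, ?_⟩
  · intro k₁ hk₁ k₂ hk₂
    rw [← permCongr_mul, hamDist_permCongr]
    have hagree : ∀ f : {x : G // x ∈ F}, (f : G) ∈ E → φ (k₁ * k₂) f = (φ k₁ * φ k₂) f := by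
      intro f hf
      have h := hφ2 k₁ hk₁ k₂ hk₂ f hf
      apply Subtype.ext
      rw [Equiv.Perm.mul_apply, h.1, h.2]
    have hsub : Fintype.card {f : {x : G // x ∈ F} // φ (k₁ * k₂) f ≠ (φ k₁ * φ k₂) f}
        ≤ Fintype.card {f : {x : G // x ∈ F} // ¬ (f : G) ∈ E} :=
      Fintype.card_subtype_mono _ _ (fun f hne hfE => hne (hagree f hfE))
    have hcompl : Fintype.card {f : {x : G // x ∈ F} // ¬ (f : G) ∈ E} = F.card - E.card := by
      rw [Fintype.card_subtype_compl, card_subtype_mem' F E hEF, hcardα]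
    unfold hamDist
    rw [Nat.card_eq_fintype_card, hcardα, div_le_iff₀ hFpos]
    have hstep : (Fintype.card {f : {x : G // x ∈ F} // φ (k₁ * k₂) f ≠ (φ k₁ * φ k₂) f} : ℝ)
        ≤ ((F.card - E.card : ℕ) : ℝ) := by exact_mod_cast hsub.trans_eq hcompl
    refine hstep.trans ?_
    rw [Nat.cast_sub hEleF]
    nlinarith
  · intro k₁ hk₁ k₂ hk₂ hne
    rw [hamDist_permCongr]
    have hsub : Fintype.card {f : {x : G // x ∈ F} // (f : G) ∈ E}
        ≤ Fintype.card {f : {x : G // x ∈ F} // φ k₁ f ≠ φ k₂ f} := by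
      refine Fintype.card_subtype_mono _ _ (fun f hf hcon => ?_)
      have h1 := hφ1 k₁ hk₁ f hf
      have h2 := hφ1 k₂ hk₂ f hf
      have : k₁ * (f : G) = k₂ * (f : G) := by
        rw [← h1, ← h2, hcon]
      exact hne (mul_right_cancel this)
    rw [card_subtype_mem' F E hEF] at hsub
    unfold hamDist
    rw [Nat.card_eq_fintype_card, hcardα, le_div_iff₀ hFpos]
    refine hEcard.trans ?_
    exact_mod_cast hsub


/-- The main construction: the special form of sofic approximations. -/
lemma special_form (hG : IsAmenableFolner G)
    (hsym : ∀ (S : Finset G) (ε : ℝ), 0 < ε →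
      ∃ E : Finset G, E.Nonempty ∧ (∀ e ∈ E, e⁻¹ ∈ E) ∧
        ∀ s ∈ S, ((E \ E.image (s * ·)).card : ℝ) < ε * E.card)
    (K : Finset G) (ε : ℝ) (hε : 0 < ε) :
    ∃ F : Finset G, F.Nonempty ∧
      (∀ f ∈ F, f⁻¹ ∈ F) ∧
      (∀ k ∈ K, ((F \ F.image (k * ·)).card : ℝ) < ε * F.card) ∧
      ∃ E : Finset G, E ⊆ F ∧ (1 - ε) * F.card ≤ (E.card : ℝ) ∧
        ∃ φ : G → Equiv.Perm {x : G // x ∈ F},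
          (∀ k₁ ∈ K, ∀ k₂ ∈ K, ∀ f : {x : G // x ∈ F}, (f : G) ∈ E →
            ((φ k₁ (φ k₂ f) : G) = k₁ * k₂ * f ∧ (φ (k₁ * k₂) f : G) = k₁ * k₂ * f)) ∧
          (∀ k ∈ K, ∀ f : {x : G // x ∈ F}, (f : G) ∈ E → (φ k f : G) = k * f) := by
  classical
  set T : Finset G := K ∪ K * K with hT
  set S : Finset G := T ∪ T.image (·⁻¹) with hS
  set ε' : ℝ := ε / ((T.card : ℝ) + 1) with hε'def
  have hc0 : (0 : ℝ) ≤ (T.card : ℝ) := Nat.cast_nonneg _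
  have hε' : 0 < ε' := div_pos hε (by linarith)
  obtain ⟨F, hFne, hFsym, hFfol⟩ := hsym S ε' hε'
  have hFpos : (0 : ℝ) < F.card := by exact_mod_cast Finset.card_pos.mpr hFne
  have hKT : K ⊆ T := subset_union_left
  refine ⟨F, hFne, hFsym, ?_, ?_⟩
  · intro k hk
    have hkS : k ∈ S := mem_union_left _ (hKT hk)
    refine (hFfol k hkS).trans_le ?_
    apply mul_le_mul_of_nonneg_right _ hFpos.le
    exact div_le_self hε.le (by linarith)
  · set E : Finset G := F.filter (fun f => ∀ t ∈ T, t * f ∈ F) with hE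
    have hEF : E ⊆ F := filter_subset _ _
    have hEleF : E.card ≤ F.card := card_le_card hEF
    -- cardinality bound
    have hsub : F \ E ⊆ T.biUnion (fun t => F \ F.image (t⁻¹ * ·)) := by
      intro f hf
      rw [mem_sdiff] at hf
      obtain ⟨hfF, hfE⟩ := hf
      rw [hE, mem_filter] at hfE
      push_neg at hfE
      obtain ⟨t, htT, htf⟩ := hfE hfF
      refine mem_biUnion.mpr ⟨t, htT, mem_sdiff.mpr ⟨hfF, fun hc => htf ?_⟩⟩
      rw [mem_image_mul_iff] at hc
      simpa using hc
    have h1 : ((F \ E).card : ℝ) ≤ ∑ t ∈ T, ((F \ F.image (t⁻¹ * ·)).card : ℝ) := by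
      rw [← Nat.cast_sum]
      exact_mod_cast (card_le_card hsub).trans (card_biUnion_le)
    have h2 : ((F \ E).card : ℝ) ≤ (T.card : ℝ) * (ε' * F.card) := by
      refine h1.trans ?_
      rw [← nsmul_eq_mul]
      apply Finset.sum_le_card_nsmul
      intro t ht
      exact (hFfol t⁻¹ (mem_union_right _ (mem_image_of_mem _ ht))).le
    have h3 : ((F \ E).card : ℝ) ≤ ε * F.card := by
      refine h2.trans ?_
      rw [hε'def, show (T.card : ℝ) * (ε / ((T.card : ℝ) + 1) * F.card)
        = ((T.card : ℝ) / ((T.card : ℝ) + 1)) * (ε * F.card) by ring]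
      apply mul_le_of_le_one_left (by positivity)
      rw [div_le_one (by linarith)]
      linarith
    have hcards : ((F \ E).card : ℝ) + E.card = F.card := by
      exact_mod_cast congrArg (Nat.cast : ℕ → ℝ) (Finset.card_sdiff_add_card_eq_card hEF)
    have hEcard : (1 - ε) * F.card ≤ (E.card : ℝ) := by nlinarith
    -- the permutations
    have hφ : ∀ k ∈ T, ∀ f : {x : G // x ∈ F}, (f : G) ∈ E →
        ((mulPerm F k f : {x : G // x ∈ F}) : G) = k * (f : G) := by
      intro k hk f hf
      rw [hE, mem_filter] at hf
      exact mulPerm_apply F k f (hf.2 k hk)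
    refine ⟨E, hEF, hEcard, fun k => mulPerm F k, ?_, ?_⟩
    · intro k₁ hk₁ k₂ hk₂ f hf
      have hT12 : k₁ * k₂ ∈ T := mem_union_right _ (Finset.mul_mem_mul hk₁ hk₂)
      have h2' := hφ k₂ (hKT hk₂) f hf
      have hf' := hf
      rw [hE, mem_filter] at hf'
      have hmem : k₁ * ((mulPerm F k₂ f : {x : G // x ∈ F}) : G) ∈ F := by
        rw [h2', ← mul_assoc]
        exact hf'.2 (k₁ * k₂) hT12
      constructor
      · rw [mulPerm_apply F k₁ _ hmem, h2', mul_assoc]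
      · rw [hφ (k₁ * k₂) hT12 f hf]
    · intro k hk f hf
      exact hφ k (hKT hk) f hf


end AmenableSofic

/-- Every amenable group is sofic; moreover, the sofic approximations can be taken
of a special form, coming from a symmetric Følner set `F`: there is `E ⊆ F` with
`|E| ≥ (1-ε)|F|` on which `φ` is governed by the group multiplication. -/
theorem amenable_isSofic_special_form {G : Type*} [Group G] [DecidableEq G]
    (hG : IsAmenableFolner G) :
    IsSofic G ∧
    ∀ (K : Finset G) (ε : ℝ), 0 < ε →
      ∃ F : Finset G, F.Nonempty ∧
        (∀ f ∈ F, f⁻¹ ∈ F) ∧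
        (∀ k ∈ K, ((F \ F.image (k * ·)).card : ℝ) < ε * F.card) ∧
        ∃ E : Finset G, E ⊆ F ∧ (1 - ε) * F.card ≤ (E.card : ℝ) ∧
          ∃ φ : G → Equiv.Perm {x : G // x ∈ F},
            (∀ k₁ ∈ K, ∀ k₂ ∈ K, ∀ f : {x : G // x ∈ F}, (f : G) ∈ E →
              ((φ k₁ (φ k₂ f) : G) = k₁ * k₂ * f ∧ (φ (k₁ * k₂) f : G) = k₁ * k₂ * f)) ∧
            (∀ k ∈ K, ∀ f : {x : G // x ∈ F}, (f : G) ∈ E → (φ k f : G) = k * f) := by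
  have hsym := fun S ε hε => symmetric_folner hG S ε hε
  have hspec := fun K ε hε => special_form hG hsym K ε hε
  exact ⟨sofic_from_special hspec, hspec⟩
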